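/- For x, y ∈ [l₁,u₁] × [l₂,u₂], the gap between the bilinear term xy and its McCormick over-estimator is at most (u₁ − l₁)(u₂ − l₂)/4; that is, min(u₁y + l₂x − u₁l₂, l₁y + u₂x − l₁u₂) − xy ≤ (u₁ − l₁)(u₂ − l₂)/4. -/
import Mathlib


/-- The gap between the bilinear term `x * y` and its McCormick over-estimator
`min (u₁y + l₂x − u₁l₂) (l₁y + u₂x − l₁u₂)` is at most `(u₁ − l₁)(u₂ − l₂)/4`. -/
theorem mccormick_overestimator_gap
    (l₁ u₁ l₂ u₂ x y : ℝ)
    (hx₁ : l₁ ≤ x) (hx₂ : x ≤ u₁) (hy₁ : l₂ ≤ y) (hy₂ : y ≤ u₂) :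
    min (u₁ * y + l₂ * x - u₁ * l₂) (l₁ * y + u₂ * x - l₁ * u₂) - x * y
      ≤ (u₁ - l₁) * (u₂ - l₂) / 4 := by
  have hp : (0:ℝ) ≤ u₁ - x := by linarith
  have hq : (0:ℝ) ≤ y - l₂ := by linarith
  have hr : (0:ℝ) ≤ x - l₁ := by linarith
  have hs : (0:ℝ) ≤ u₂ - y := by linarith
  rcases le_total (u₁ * y + l₂ * x - u₁ * l₂) (l₁ * y + u₂ * x - l₁ * u₂) with h | h
  · rw [min_eq_left h]
    nlinarith [sq_nonneg ((u₁ - x) * (u₂ - y) - (x - l₁) * (y - l₂)),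
      mul_nonneg hp hq, mul_nonneg hr hs, mul_nonneg hp hs, mul_nonneg hr hq,
      mul_nonneg (mul_nonneg hp hq) (mul_nonneg hr hs)]
  · rw [min_eq_right h]
    nlinarith [sq_nonneg ((u₁ - x) * (u₂ - y) - (x - l₁) * (y - l₂)),
      mul_nonneg hp hq, mul_nonneg hr hs, mul_nonneg hp hs, mul_nonneg hr hq,
      mul_nonneg (mul_nonneg hp hq) (mul_nonneg hr hs)]
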